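/- Let v_θ, v₃ : [0,∞) × ℝ → ℝ be twice continuously differentiable, let w₃ : [0,∞) × ℝ → ℝ be continuously differentiable with r w₃(r,z) = ∂_r( r v_θ )(r,z) for all (r,z), and let φ : [0,∞) × ℝ → ℝ be continuously differentiable and compactly supported. Then ∫₀^∞ ∫_ℝ [ ∂_r( r v_θ ) ∂₃ v₃ − r ∂₃ v_θ ∂_r v₃ ] w₃ φ² dz dr = ∫₀^∞ ∫_ℝ r v_θ [ − ∂₃ v₃ ∂_r w₃ φ² − ∂₃ v₃ w₃ ∂_r(φ²) + ∂_r v₃ ∂₃ w₃ φ² + ∂_r v₃ w₃ ∂₃(φ²) ] dz dr. -/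

import Mathlib

open MeasureTheory

/-- Partial derivative in the first (radial) variable of a function of `(r, z)`. -/
noncomputable def pdr2 (f : ℝ × ℝ → ℝ) (p : ℝ × ℝ) : ℝ :=
  deriv (fun s => f (s, p.2)) p.1

/-- Partial derivative in the second (vertical) variable of a function of `(r, z)`. -/
noncomputable def pdz2 (f : ℝ × ℝ → ℝ) (p : ℝ × ℝ) : ℝ :=
  deriv (fun s => f (p.1, s)) p.2

open Set Filter Topology

lemma hasDerivAt_mk_left (r z : ℝ) :
    HasDerivAt (fun s : ℝ => (s, z)) ((1:ℝ), (0:ℝ)) r :=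
  (hasDerivAt_id r).prodMk (hasDerivAt_const r z)

lemma hasDerivAt_mk_right (r z : ℝ) :
    HasDerivAt (fun s : ℝ => (r, s)) ((0:ℝ), (1:ℝ)) z :=
  (hasDerivAt_const z r).prodMk (hasDerivAt_id z)

lemma hasDerivAt_pdr2 {g : ℝ × ℝ → ℝ} {r z : ℝ} (hg : DifferentiableAt ℝ g (r, z)) :
    HasDerivAt (fun s => g (s, z)) (pdr2 g (r, z)) r := by
  have h : DifferentiableAt ℝ (fun s => g (s, z)) r :=
    hg.comp r ((hasDerivAt_mk_left r z).differentiableAt)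
  exact h.hasDerivAt

lemma hasDerivAt_pdz2 {g : ℝ × ℝ → ℝ} {r z : ℝ} (hg : DifferentiableAt ℝ g (r, z)) :
    HasDerivAt (fun s => g (r, s)) (pdz2 g (r, z)) z := by
  have h : DifferentiableAt ℝ (fun s => g (r, s)) z :=
    hg.comp z ((hasDerivAt_mk_right r z).differentiableAt)
  exact h.hasDerivAt

lemma pdr2_eq_fderiv {g : ℝ × ℝ → ℝ} {r z : ℝ} (hg : DifferentiableAt ℝ g (r, z)) :
    pdr2 g (r, z) = fderiv ℝ g (r, z) (1, 0) := by
  have := hg.hasFDerivAt.comp_hasDerivAt r (hasDerivAt_mk_left r z)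
  exact (hasDerivAt_pdr2 hg).unique this

lemma pdz2_eq_fderiv {g : ℝ × ℝ → ℝ} {r z : ℝ} (hg : DifferentiableAt ℝ g (r, z)) :
    pdz2 g (r, z) = fderiv ℝ g (r, z) (0, 1) := by
  have := hg.hasFDerivAt.comp_hasDerivAt z (hasDerivAt_mk_right r z)
  exact (hasDerivAt_pdz2 hg).unique this

lemma pdr2_eq_fderiv' {g : ℝ × ℝ → ℝ} (hg : Differentiable ℝ g) :
    pdr2 g = fun p => fderiv ℝ g p (1, 0) := by
  funext p
  obtain ⟨r, z⟩ := p
  exact pdr2_eq_fderiv (hg _)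

lemma pdz2_eq_fderiv' {g : ℝ × ℝ → ℝ} (hg : Differentiable ℝ g) :
    pdz2 g = fun p => fderiv ℝ g p (0, 1) := by
  funext p
  obtain ⟨r, z⟩ := p
  exact pdz2_eq_fderiv (hg _)

lemma contDiff_pdr2 {g : ℝ × ℝ → ℝ} (hg : ContDiff ℝ 2 g) : ContDiff ℝ 1 (pdr2 g) := by
  rw [pdr2_eq_fderiv' (hg.differentiable two_ne_zero)]
  exact (hg.fderiv_right (by norm_num)).clm_apply contDiff_const

lemma contDiff_pdz2 {g : ℝ × ℝ → ℝ} (hg : ContDiff ℝ 2 g) : ContDiff ℝ 1 (pdz2 g) := by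
  rw [pdz2_eq_fderiv' (hg.differentiable two_ne_zero)]
  exact (hg.fderiv_right (by norm_num)).clm_apply contDiff_const

lemma continuous_pdr2 {g : ℝ × ℝ → ℝ} (hg : ContDiff ℝ 1 g) : Continuous (pdr2 g) := by
  rw [pdr2_eq_fderiv' (hg.differentiable one_ne_zero)]
  exact (hg.continuous_fderiv one_ne_zero).clm_apply continuous_const

lemma continuous_pdz2 {g : ℝ × ℝ → ℝ} (hg : ContDiff ℝ 1 g) : Continuous (pdz2 g) := by
  rw [pdz2_eq_fderiv' (hg.differentiable one_ne_zero)]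
  exact (hg.continuous_fderiv one_ne_zero).clm_apply continuous_const

lemma hasCompactSupport_pdr2 {g : ℝ × ℝ → ℝ} (hg : Differentiable ℝ g)
    (hgc : HasCompactSupport g) : HasCompactSupport (pdr2 g) := by
  rw [pdr2_eq_fderiv' hg]
  exact hgc.fderiv_apply ℝ _

lemma hasCompactSupport_pdz2 {g : ℝ × ℝ → ℝ} (hg : Differentiable ℝ g)
    (hgc : HasCompactSupport g) : HasCompactSupport (pdz2 g) := by
  rw [pdz2_eq_fderiv' hg]
  exact hgc.fderiv_apply ℝ _

lemma pdr2_pdz2_comm {g : ℝ × ℝ → ℝ} (hg : ContDiff ℝ 2 g) (r z : ℝ) :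
    pdr2 (pdz2 g) (r, z) = pdz2 (pdr2 g) (r, z) := by
  set f' := fderiv ℝ g with hf'def
  have hdiff : Differentiable ℝ g := hg.differentiable two_ne_zero
  have hf'cd : ContDiff ℝ 1 f' := hg.fderiv_right (by norm_num)
  have hf'diff : Differentiable ℝ f' := hf'cd.differentiable one_ne_zero
  have hf' : ∀ y, HasFDerivAt g (f' y) y := fun y => (hdiff y).hasFDerivAt
  have hx : HasFDerivAt f' (fderiv ℝ f' (r, z)) (r, z) := (hf'diff _).hasFDerivAt
  have hsymm := second_derivative_symmetric hf' hx ((1:ℝ), (0:ℝ)) ((0:ℝ), (1:ℝ))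
  -- pdr2 (pdz2 g) (r,z) = fderiv f' (r,z) (1,0) (0,1)
  have h1 : pdr2 (pdz2 g) (r, z) = fderiv ℝ f' (r, z) (1, 0) (0, 1) := by
    have hc : HasDerivAt (fun s => f' (s, z)) (fderiv ℝ f' (r, z) (1, 0)) r :=
      hx.comp_hasDerivAt r (hasDerivAt_mk_left r z)
    have := hc.clm_apply (hasDerivAt_const r ((0:ℝ), (1:ℝ)))
    simp only [map_zero, add_zero] at this
    have heq : (fun s => f' (s, z) ((0:ℝ), (1:ℝ))) = fun s => pdz2 g (s, z) := by
      funext s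
      exact (pdz2_eq_fderiv (hdiff _)).symm
    rw [heq] at this
    exact (hasDerivAt_pdr2 ((contDiff_pdz2 hg).differentiable one_ne_zero _)).unique this
  have h2 : pdz2 (pdr2 g) (r, z) = fderiv ℝ f' (r, z) (0, 1) (1, 0) := by
    have hc : HasDerivAt (fun s => f' (r, s)) (fderiv ℝ f' (r, z) (0, 1)) z :=
      hx.comp_hasDerivAt z (hasDerivAt_mk_right r z)
    have := hc.clm_apply (hasDerivAt_const z ((1:ℝ), (0:ℝ)))
    simp only [map_zero, add_zero] at this
    have heq : (fun s => f' (r, s) ((1:ℝ), (0:ℝ))) = fun s => pdr2 g (r, s) := by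
      funext s
      exact (pdr2_eq_fderiv (hdiff _)).symm
    rw [heq] at this
    exact (hasDerivAt_pdz2 ((contDiff_pdr2 hg).differentiable one_ne_zero _)).unique this
  rw [h1, h2, hsymm]

lemma isClosedEmbedding_mk_right (r : ℝ) : Topology.IsClosedEmbedding (fun z : ℝ => (r, z)) := by
  have : Isometry (fun z : ℝ => (r, z)) := Isometry.of_dist_eq fun a b => by
    simp [Prod.dist_eq, dist_nonneg]
  exact this.isClosedEmbedding

lemma isClosedEmbedding_mk_left (z : ℝ) : Topology.IsClosedEmbedding (fun r : ℝ => (r, z)) := by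
  have : Isometry (fun r : ℝ => (r, z)) := Isometry.of_dist_eq fun a b => by
    simp [Prod.dist_eq, dist_nonneg]
  exact this.isClosedEmbedding

lemma hcs_slice_right {g : ℝ × ℝ → ℝ} (hgc : HasCompactSupport g) (r : ℝ) :
    HasCompactSupport (fun z => g (r, z)) :=
  hgc.comp_isClosedEmbedding (isClosedEmbedding_mk_right r)

lemma hcs_slice_left {g : ℝ × ℝ → ℝ} (hgc : HasCompactSupport g) (z : ℝ) :
    HasCompactSupport (fun r => g (r, z)) :=
  hgc.comp_isClosedEmbedding (isClosedEmbedding_mk_left z)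

/-- Integral over ℝ of the z-derivative of a C¹ compactly supported function is 0. -/
lemma integral_pdz2_eq_zero {Q : ℝ × ℝ → ℝ} (hQ : ContDiff ℝ 1 Q) (hQc : HasCompactSupport Q)
    (r : ℝ) : ∫ z : ℝ, pdz2 Q (r, z) = 0 := by
  have hdiff := hQ.differentiable one_ne_zero
  have hderiv : ∀ z : ℝ, HasDerivAt (fun t => Q (r, t)) (pdz2 Q (r, z)) z := fun z =>
    hasDerivAt_pdz2 (hdiff _)
  have hint : Integrable (fun z => pdz2 Q (r, z)) := by
    apply Continuous.integrable_of_hasCompactSupport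
    · exact (continuous_pdz2 hQ).comp (continuous_const.prodMk continuous_id)
    · exact hcs_slice_right (hasCompactSupport_pdz2 hdiff hQc) r
  have hcs : HasCompactSupport (fun z => Q (r, z)) := hcs_slice_right hQc r
  have hcont : Continuous (fun z => Q (r, z)) :=
    (hQ.continuous).comp (continuous_const.prodMk continuous_id)
  have hbot : Tendsto (fun z => Q (r, z)) atBot (𝓝 0) := by
    have := hcs.is_zero_at_infty (f := fun z => Q (r, z))
    exact this.mono_left (atBot_le_cocompact)
  have htop : Tendsto (fun z => Q (r, z)) atTop (𝓝 0) := by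
    have := hcs.is_zero_at_infty (f := fun z => Q (r, z))
    exact this.mono_left (atTop_le_cocompact)
  have := integral_of_hasDerivAt_of_tendsto hderiv hint hbot htop
  simpa using this

/-- Integral over (0,∞) of the r-derivative of a C¹ compactly supported function
vanishing at r = 0 is 0. -/
lemma integral_Ioi_pdr2_eq_zero {P : ℝ × ℝ → ℝ} (hP : ContDiff ℝ 1 P)
    (hPc : HasCompactSupport P) (z : ℝ) (h0 : P (0, z) = 0) :
    ∫ r in Ioi (0:ℝ), pdr2 P (r, z) = 0 := by
  have hdiff := hP.differentiable one_ne_zero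
  have hcont : Continuous (fun r => P (r, z)) :=
    (hP.continuous).comp (continuous_id.prodMk continuous_const)
  have hderiv : ∀ x ∈ Ioi (0:ℝ), HasDerivAt (fun r => P (r, z)) (pdr2 P (x, z)) x := fun x _ =>
    hasDerivAt_pdr2 (hdiff _)
  have hint : Integrable (fun r => pdr2 P (r, z)) := by
    apply Continuous.integrable_of_hasCompactSupport
    · exact (continuous_pdr2 hP).comp (continuous_id.prodMk continuous_const)
    · exact hcs_slice_left (hasCompactSupport_pdr2 hdiff hPc) z
  have hcs : HasCompactSupport (fun r => P (r, z)) := hcs_slice_left hPc z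
  have htop : Tendsto (fun r => P (r, z)) atTop (𝓝 0) :=
    (hcs.is_zero_at_infty (f := fun r => P (r, z))).mono_left atTop_le_cocompact
  have := integral_Ioi_of_hasDerivAt_of_tendsto hcont.continuousWithinAt hderiv
    hint.integrableOn htop
  simpa [h0] using this

lemma integrable_restrict_prod {h : ℝ × ℝ → ℝ} (hc : Continuous h)
    (hcs : HasCompactSupport h) :
    Integrable h ((volume.restrict (Ioi (0:ℝ))).prod volume) := by
  have hi : Integrable h (volume : Measure (ℝ × ℝ)) :=
    hc.integrable_of_hasCompactSupport hcs
  rw [Measure.restrict_prod_eq_prod_univ, ← Measure.volume_eq_prod]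
  exact hi.restrict

lemma integral_Ioi_integral_pdr2 {P : ℝ × ℝ → ℝ} (hP : ContDiff ℝ 1 P)
    (hPc : HasCompactSupport P) (h0 : ∀ z, P (0, z) = 0) :
    (∫ r in Ioi (0:ℝ), ∫ z : ℝ, pdr2 P (r, z)) = 0 := by
  have hc : Continuous (pdr2 P) := continuous_pdr2 hP
  have hcs : HasCompactSupport (pdr2 P) := hasCompactSupport_pdr2 (hP.differentiable one_ne_zero) hPc
  have hint : Integrable (Function.uncurry fun r z => pdr2 P (r, z))
      ((volume.restrict (Ioi (0:ℝ))).prod volume) := by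
    have := integrable_restrict_prod hc hcs
    exact this.congr (Filter.Eventually.of_forall fun p => rfl)
  rw [integral_integral_swap hint]
  simp only [integral_Ioi_pdr2_eq_zero hP hPc _ (h0 _), integral_zero]

lemma integrable_slice {h : ℝ × ℝ → ℝ} (hc : Continuous h) (hcs : HasCompactSupport h)
    (r : ℝ) : Integrable (fun z => h (r, z)) := by
  apply Continuous.integrable_of_hasCompactSupport
  · exact hc.comp (continuous_const.prodMk continuous_id)
  · exact hcs_slice_right hcs r

lemma pdr2_mul4 {a b c d : ℝ × ℝ → ℝ} {r z : ℝ}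
    (ha : DifferentiableAt ℝ a (r, z)) (hb : DifferentiableAt ℝ b (r, z))
    (hc : DifferentiableAt ℝ c (r, z)) (hd : DifferentiableAt ℝ d (r, z)) :
    pdr2 (fun p => a p * b p * c p * d p) (r, z) =
      pdr2 a (r, z) * b (r, z) * c (r, z) * d (r, z) +
      a (r, z) * pdr2 b (r, z) * c (r, z) * d (r, z) +
      a (r, z) * b (r, z) * pdr2 c (r, z) * d (r, z) +
      a (r, z) * b (r, z) * c (r, z) * pdr2 d (r, z) := by
  have h := (((hasDerivAt_pdr2 ha).mul (hasDerivAt_pdr2 hb)).mul (hasDerivAt_pdr2 hc)).mul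
    (hasDerivAt_pdr2 hd)
  exact h.deriv.trans (by simp only [Pi.mul_apply]; ring)

lemma pdz2_mul4 {a b c d : ℝ × ℝ → ℝ} {r z : ℝ}
    (ha : DifferentiableAt ℝ a (r, z)) (hb : DifferentiableAt ℝ b (r, z))
    (hc : DifferentiableAt ℝ c (r, z)) (hd : DifferentiableAt ℝ d (r, z)) :
    pdz2 (fun p => a p * b p * c p * d p) (r, z) =
      pdz2 a (r, z) * b (r, z) * c (r, z) * d (r, z) +
      a (r, z) * pdz2 b (r, z) * c (r, z) * d (r, z) +
      a (r, z) * b (r, z) * pdz2 c (r, z) * d (r, z) +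
      a (r, z) * b (r, z) * c (r, z) * pdz2 d (r, z) := by
  have h := (((hasDerivAt_pdz2 ha).mul (hasDerivAt_pdz2 hb)).mul (hasDerivAt_pdz2 hc)).mul
    (hasDerivAt_pdz2 hd)
  exact h.deriv.trans (by simp only [Pi.mul_apply]; ring)

lemma key_pointwise (vθ v3 w3 φ : ℝ × ℝ → ℝ) (hvθ : ContDiff ℝ 2 vθ) (hv3 : ContDiff ℝ 2 v3)
    (hw3 : ContDiff ℝ 1 w3) (hφ : ContDiff ℝ 1 φ) (r z : ℝ) :
    (deriv (fun s => s * vθ (s, z)) r * pdz2 v3 (r, z) -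
        r * pdz2 vθ (r, z) * pdr2 v3 (r, z)) * w3 (r, z) * φ (r, z) ^ 2
    = r * vθ (r, z) * (-(pdz2 v3 (r, z)) * pdr2 w3 (r, z) * φ (r, z) ^ 2 -
        pdz2 v3 (r, z) * w3 (r, z) * pdr2 (fun p => φ p ^ 2) (r, z) +
        pdr2 v3 (r, z) * pdz2 w3 (r, z) * φ (r, z) ^ 2 +
        pdr2 v3 (r, z) * w3 (r, z) * pdz2 (fun p => φ p ^ 2) (r, z)) +
      (pdr2 (fun p => p.1 * vθ p * pdz2 v3 p * w3 p * φ p ^ 2) (r, z) +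
       pdz2 (fun p => -(p.1 * vθ p * pdr2 v3 p * w3 p * φ p ^ 2)) (r, z)) := by
  have hm : ContDiff ℝ 2 (fun p : ℝ × ℝ => p.1 * vθ p) := contDiff_fst.mul hvθ
  have hmd : DifferentiableAt ℝ (fun p : ℝ × ℝ => p.1 * vθ p) (r, z) :=
    (hm.differentiable two_ne_zero) _
  have hz3 := contDiff_pdz2 hv3
  have hr3 := contDiff_pdr2 hv3
  have hφ2 : ContDiff ℝ 1 (fun p : ℝ × ℝ => φ p ^ 2) := hφ.pow 2
  have e1 := pdr2_mul4 (a := fun p : ℝ × ℝ => p.1 * vθ p) (b := pdz2 v3) (c := w3)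
      (d := fun p => φ p ^ 2) hmd ((hz3.differentiable one_ne_zero) _)
      ((hw3.differentiable one_ne_zero) _) ((hφ2.differentiable one_ne_zero) _)
  have e2 := pdz2_mul4 (a := fun p : ℝ × ℝ => p.1 * vθ p) (b := pdr2 v3) (c := w3)
      (d := fun p => φ p ^ 2) hmd ((hr3.differentiable one_ne_zero) _)
      ((hw3.differentiable one_ne_zero) _) ((hφ2.differentiable one_ne_zero) _)
  have e3 : pdz2 (fun p : ℝ × ℝ => -(p.1 * vθ p * pdr2 v3 p * w3 p * φ p ^ 2)) (r, z)
      = - pdz2 (fun p : ℝ × ℝ => p.1 * vθ p * pdr2 v3 p * w3 p * φ p ^ 2) (r, z) :=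
    deriv.neg
  have e4 : pdr2 (fun p : ℝ × ℝ => p.1 * vθ p) (r, z) = deriv (fun s => s * vθ (s, z)) r := rfl
  have e5 : pdz2 (fun p : ℝ × ℝ => p.1 * vθ p) (r, z) = r * pdz2 vθ (r, z) :=
    ((hasDerivAt_pdz2 ((hvθ.differentiable two_ne_zero) _)).const_mul r).deriv
  have e6 := pdr2_pdz2_comm hv3 r z
  rw [e1, e3, e2, e4, e5, e6]
  ring


lemma hcs_neg {α : Type*} [TopologicalSpace α] {f : α → ℝ} (h : HasCompactSupport f) :
    HasCompactSupport (fun x => -(f x)) := by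
  unfold HasCompactSupport tsupport
  have : (Function.support fun x => -f x) = Function.support f := by ext x; simp
  rw [this]
  exact h

lemma hcs_sub {α : Type*} [TopologicalSpace α] {f g : α → ℝ} (h1 : HasCompactSupport f)
    (h2 : HasCompactSupport g) : HasCompactSupport (fun x => f x - g x) := by
  have := h1.add (hcs_neg h2)
  have e : (fun x => f x - g x) = f + fun x => -g x := by
    funext x
    simp [sub_eq_add_neg]
  rw [e]
  exact this

set_option maxHeartbeats 2000000 in
/-- For `C²` functions `v_θ, v₃` of `(r,z)`, a `C¹` function `w₃` with
`r w₃ = ∂_r(r v_θ)`, and a `C¹` compactly supported `φ`,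
`∫₀^∞∫_ℝ [∂_r(r v_θ) ∂₃v₃ − r ∂₃v_θ ∂_r v₃] w₃ φ² dz dr
  = ∫₀^∞∫_ℝ r v_θ [−∂₃v₃ ∂_r w₃ φ² − ∂₃v₃ w₃ ∂_r(φ²) + ∂_r v₃ ∂₃w₃ φ² + ∂_r v₃ w₃ ∂₃(φ²)] dz dr`. -/
theorem stmt_14 (vθ v3 : ℝ × ℝ → ℝ) (hvθ : ContDiff ℝ 2 vθ) (hv3 : ContDiff ℝ 2 v3)
    (w3 : ℝ × ℝ → ℝ) (hw3 : ContDiff ℝ 1 w3)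
    (hrel : ∀ p : ℝ × ℝ, p.1 * w3 p = deriv (fun s => s * vθ (s, p.2)) p.1)
    (φ : ℝ × ℝ → ℝ) (hφ : ContDiff ℝ 1 φ) (hφc : HasCompactSupport φ) :
    ∫ r in Set.Ioi (0:ℝ), ∫ z : ℝ,
        (deriv (fun s => s * vθ (s, z)) r * pdz2 v3 (r, z) -
          r * pdz2 vθ (r, z) * pdr2 v3 (r, z)) * w3 (r, z) * φ (r, z) ^ 2
      = ∫ r in Set.Ioi (0:ℝ), ∫ z : ℝ,
        r * vθ (r, z) * (-(pdz2 v3 (r, z)) * pdr2 w3 (r, z) * φ (r, z) ^ 2 -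
          pdz2 v3 (r, z) * w3 (r, z) * pdr2 (fun p => φ p ^ 2) (r, z) +
          pdr2 v3 (r, z) * pdz2 w3 (r, z) * φ (r, z) ^ 2 +
          pdr2 v3 (r, z) * w3 (r, z) * pdz2 (fun p => φ p ^ 2) (r, z)) := by
  have hvθ1 : ContDiff ℝ 1 vθ := hvθ.of_le one_le_two
  have hφ2 : ContDiff ℝ 1 (fun p : ℝ × ℝ => φ p ^ 2) := hφ.pow 2
  have hφ2c : HasCompactSupport (fun p : ℝ × ℝ => φ p ^ 2) := by
    apply hφc.mono'
    intro p hp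
    apply subset_closure
    simp only [Function.mem_support] at hp ⊢
    exact fun h => hp (by simp [h])
  have hz3 := contDiff_pdz2 hv3
  have hr3 := contDiff_pdr2 hv3
  have hm1 : ContDiff ℝ 1 (fun p : ℝ × ℝ => p.1 * vθ p) :=
    (contDiff_fst.mul hvθ).of_le one_le_two
  have hP : ContDiff ℝ 1 (fun p => p.1 * vθ p * pdz2 v3 p * w3 p * φ p ^ 2) := ((hm1.mul hz3).mul hw3).mul hφ2
  have hPc : HasCompactSupport (fun p => p.1 * vθ p * pdz2 v3 p * w3 p * φ p ^ 2) := hφ2c.mul_left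
  have hQ : ContDiff ℝ 1 (fun p => -(p.1 * vθ p * pdr2 v3 p * w3 p * φ p ^ 2)) := (((hm1.mul hr3).mul hw3).mul hφ2).neg
  have hQc : HasCompactSupport (fun p => -(p.1 * vθ p * pdr2 v3 p * w3 p * φ p ^ 2)) := hcs_neg hφ2c.mul_left
  have hDc : Continuous (fun p : ℝ × ℝ => pdr2 (fun p => p.1 * vθ p * pdz2 v3 p * w3 p * φ p ^ 2) p + pdz2 (fun p => -(p.1 * vθ p * pdr2 v3 p * w3 p * φ p ^ 2)) p) :=
    (continuous_pdr2 hP).add (continuous_pdz2 hQ)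
  have hDcs : HasCompactSupport (fun p : ℝ × ℝ => pdr2 (fun p => p.1 * vθ p * pdz2 v3 p * w3 p * φ p ^ 2) p + pdz2 (fun p => -(p.1 * vθ p * pdr2 v3 p * w3 p * φ p ^ 2)) p) :=
    (hasCompactSupport_pdr2 (hP.differentiable one_ne_zero) hPc).add
      (hasCompactSupport_pdz2 (hQ.differentiable one_ne_zero) hQc)
  have hφ2d : Differentiable ℝ (fun p : ℝ × ℝ => φ p ^ 2) := hφ2.differentiable one_ne_zero
  have hRc : Continuous (fun p : ℝ × ℝ => p.1 * vθ p * (-(pdz2 v3 p) * pdr2 w3 p * φ p ^ 2 - pdz2 v3 p * w3 p * pdr2 (fun q => φ q ^ 2) p + pdr2 v3 p * pdz2 w3 p * φ p ^ 2 + pdr2 v3 p * w3 p * pdz2 (fun q => φ q ^ 2) p)) := by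
    refine (continuous_fst.mul hvθ.continuous).mul ?_
    exact ((((hz3.continuous.neg.mul (continuous_pdr2 hw3)).mul (hφ.continuous.pow 2)).sub
        ((hz3.continuous.mul hw3.continuous).mul (continuous_pdr2 hφ2))).add
        ((hr3.continuous.mul (continuous_pdz2 hw3)).mul (hφ.continuous.pow 2))).add
        ((hr3.continuous.mul hw3.continuous).mul (continuous_pdz2 hφ2))
  have hRcs : HasCompactSupport (fun p : ℝ × ℝ => p.1 * vθ p * (-(pdz2 v3 p) * pdr2 w3 p * φ p ^ 2 - pdz2 v3 p * w3 p * pdr2 (fun q => φ q ^ 2) p + pdr2 v3 p * pdz2 w3 p * φ p ^ 2 + pdr2 v3 p * w3 p * pdz2 (fun q => φ q ^ 2) p)) := by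
    have t1 : HasCompactSupport (fun p : ℝ × ℝ => -(pdz2 v3 p) * pdr2 w3 p * φ p ^ 2) :=
      hφ2c.mul_left
    have t2 : HasCompactSupport
        (fun p : ℝ × ℝ => pdz2 v3 p * w3 p * pdr2 (fun q => φ q ^ 2) p) :=
      (hasCompactSupport_pdr2 hφ2d hφ2c).mul_left
    have t3 : HasCompactSupport (fun p : ℝ × ℝ => pdr2 v3 p * pdz2 w3 p * φ p ^ 2) :=
      hφ2c.mul_left
    have t4 : HasCompactSupport
        (fun p : ℝ × ℝ => pdr2 v3 p * w3 p * pdz2 (fun q => φ q ^ 2) p) :=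
      (hasCompactSupport_pdz2 hφ2d hφ2c).mul_left
    exact ((((hcs_sub t1 t2)).add t3).add t4).mul_left
  have hRint := integrable_restrict_prod hRc hRcs
  have hDint := integrable_restrict_prod hDc hDcs
  have hkey := key_pointwise vθ v3 w3 φ hvθ hv3 hw3 hφ
  simp only [hkey]
  have esplit : ∀ r : ℝ, (∫ z : ℝ, (r * vθ (r, z) * (-(pdz2 v3 (r, z)) * pdr2 w3 (r, z) * φ (r, z) ^ 2 - pdz2 v3 (r, z) * w3 (r, z) * pdr2 (fun p => φ p ^ 2) (r, z) + pdr2 v3 (r, z) * pdz2 w3 (r, z) * φ (r, z) ^ 2 + pdr2 v3 (r, z) * w3 (r, z) * pdz2 (fun p => φ p ^ 2) (r, z)) +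
      (pdr2 (fun p => p.1 * vθ p * pdz2 v3 p * w3 p * φ p ^ 2) (r, z) + pdz2 (fun p => -(p.1 * vθ p * pdr2 v3 p * w3 p * φ p ^ 2)) (r, z)))) =
      (∫ z : ℝ, r * vθ (r, z) * (-(pdz2 v3 (r, z)) * pdr2 w3 (r, z) * φ (r, z) ^ 2 - pdz2 v3 (r, z) * w3 (r, z) * pdr2 (fun p => φ p ^ 2) (r, z) + pdr2 v3 (r, z) * pdz2 w3 (r, z) * φ (r, z) ^ 2 + pdr2 v3 (r, z) * w3 (r, z) * pdz2 (fun p => φ p ^ 2) (r, z))) +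
      ∫ z : ℝ, (pdr2 (fun p => p.1 * vθ p * pdz2 v3 p * w3 p * φ p ^ 2) (r, z) + pdz2 (fun p => -(p.1 * vθ p * pdr2 v3 p * w3 p * φ p ^ 2)) (r, z)) := fun r =>
    integral_add (integrable_slice hRc hRcs r) (integrable_slice hDc hDcs r)
  simp only [esplit]
  rw [integral_add hRint.integral_prod_left hDint.integral_prod_left]
  have hzero : (∫ r in Set.Ioi (0:ℝ), ∫ z : ℝ,
      (pdr2 (fun p => p.1 * vθ p * pdz2 v3 p * w3 p * φ p ^ 2) (r, z) + pdz2 (fun p => -(p.1 * vθ p * pdr2 v3 p * w3 p * φ p ^ 2)) (r, z))) = 0 := by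
    have e2 : ∀ r : ℝ, (∫ z : ℝ, (pdr2 (fun p => p.1 * vθ p * pdz2 v3 p * w3 p * φ p ^ 2) (r, z) + pdz2 (fun p => -(p.1 * vθ p * pdr2 v3 p * w3 p * φ p ^ 2)) (r, z))) =
        ∫ z : ℝ, pdr2 (fun p => p.1 * vθ p * pdz2 v3 p * w3 p * φ p ^ 2) (r, z) := by
      intro r
      rw [integral_add
        (integrable_slice (continuous_pdr2 hP)
          (hasCompactSupport_pdr2 (hP.differentiable one_ne_zero) hPc) r)
        (integrable_slice (continuous_pdz2 hQ)
          (hasCompactSupport_pdz2 (hQ.differentiable one_ne_zero) hQc) r),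
        integral_pdz2_eq_zero hQ hQc r, add_zero]
    simp only [e2]
    exact integral_Ioi_integral_pdr2 hP hPc (fun z => by simp)
  rw [hzero, add_zero]
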